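/- For every integer d ≥ 2 and all integers j₁, k₁, j₂, k₂, applying the pair of controlled-X gates (c-X)_{A₁A₂} · (c-X)_{B₁B₂} to the state |φ^{j₁,k₁}⟩_{A₁B₁} ⊗ |φ^{j₂,k₂}⟩_{A₂B₂} produces the state |φ^{j₁, k₁−k₂}⟩_{A₁B₁} ⊗ |φ^{j₁+j₂, k₂}⟩_{A₂B₂}. -/

import Mathlib

open Matrix

noncomputable def ω (d : ℕ) : ℂ := Complex.exp (2 * Real.pi * Complex.I / d)

/-- The generalized Pauli `X` on `ℂ^d`: `X |k⟩ = |k+1 mod d⟩`. -/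
def Xmat (d : ℕ) [NeZero d] : Matrix (ZMod d) (ZMod d) ℂ :=
  Matrix.of fun i k => if i = k + 1 then 1 else 0

def XmatInv (d : ℕ) [NeZero d] : Matrix (ZMod d) (ZMod d) ℂ :=
  Matrix.of fun i k => if k = i + 1 then 1 else 0

lemma Xmat_mul_XmatInv (d : ℕ) [NeZero d] : Xmat d * XmatInv d = 1 := by
  ext i k
  rw [Matrix.mul_apply, Finset.sum_eq_single (i - 1)]
  · simp only [Xmat, XmatInv, Matrix.of_apply, sub_add_cancel, Matrix.one_apply]
    simp [eq_comm]
  · intro c _ hc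
    have h : i ≠ c + 1 := fun h => hc (by rw [h, add_sub_cancel_right])
    simp [Xmat, Matrix.of_apply, h]
  · intro h; exact absurd (Finset.mem_univ _) h

/-- `X` as a unit (invertible matrix), so that integer powers `X ^ (j : ℤ)` make sense. -/
noncomputable def XU (d : ℕ) [NeZero d] : (Matrix (ZMod d) (ZMod d) ℂ)ˣ :=
  ⟨Xmat d, XmatInv d, Xmat_mul_XmatInv d, mul_eq_one_comm.mp (Xmat_mul_XmatInv d)⟩

/-- The generalized Pauli `Z` on `ℂ^d`: `Z |k⟩ = ω^k |k⟩`. -/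
noncomputable def Zmat (d : ℕ) [NeZero d] : Matrix (ZMod d) (ZMod d) ℂ :=
  Matrix.diagonal fun i => ω d ^ i.val

lemma omega_ne_zero (d : ℕ) : ω d ≠ 0 := Complex.exp_ne_zero _

/-- `Z` as a unit (invertible matrix). -/
noncomputable def ZU (d : ℕ) [NeZero d] : (Matrix (ZMod d) (ZMod d) ℂ)ˣ :=
  ⟨Zmat d, Matrix.diagonal fun i => (ω d ^ i.val)⁻¹,
   by
    rw [Zmat, Matrix.diagonal_mul_diagonal]
    have h : (fun i : ZMod d => ω d ^ i.val * (ω d ^ i.val)⁻¹) = fun _ => (1 : ℂ) := by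
      funext i
      exact mul_inv_cancel₀ (pow_ne_zero _ (omega_ne_zero d))
    rw [h, Matrix.diagonal_one],
   by
    rw [Zmat, Matrix.diagonal_mul_diagonal]
    have h : (fun i : ZMod d => (ω d ^ i.val)⁻¹ * ω d ^ i.val) = fun _ => (1 : ℂ) := by
      funext i
      exact inv_mul_cancel₀ (pow_ne_zero _ (omega_ne_zero d))
    rw [h, Matrix.diagonal_one]⟩

/-- Integer power `X^j` of the generalized Pauli `X`. -/
noncomputable def Xpow (d : ℕ) [NeZero d] (j : ℤ) : Matrix (ZMod d) (ZMod d) ℂ := ↑(XU d ^ j)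

/-- Integer power `Z^k` of the generalized Pauli `Z`. -/
noncomputable def Zpow (d : ℕ) [NeZero d] (k : ℤ) : Matrix (ZMod d) (ZMod d) ℂ := ↑(ZU d ^ k)

/-- The maximally entangled state `|φ⟩ = (1/√d) ∑ i, |i⟩⊗|i⟩` on `ℂ^d ⊗ ℂ^d`. -/
noncomputable def phi (d : ℕ) [NeZero d] : ZMod d × ZMod d → ℂ :=
  (1 / (Real.sqrt d : ℂ)) •
    ∑ i : ZMod d, fun p : ZMod d × ZMod d =>
      (if p.1 = i then (1 : ℂ) else 0) * (if p.2 = i then 1 else 0)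

/-- The Bell state `|φ^{j,k}⟩ = (X^j Z^k ⊗ I)|φ⟩` (exponents mod `d`). -/
noncomputable def bell (d : ℕ) [NeZero d] (j k : ℤ) : ZMod d × ZMod d → ℂ :=
  Matrix.mulVec
    (Matrix.kroneckerMap (· * ·) (Xpow d j * Zpow d k) (1 : Matrix (ZMod d) (ZMod d) ℂ))
    (phi d)

/-- Embed a two-qudit gate `G` into a multi-register system, acting on registers `r` (first
tensor factor of `G`) and `s` (second tensor factor of `G`), identity elsewhere. -/
def gate2 {ι : Type*} [Fintype ι] [DecidableEq ι] (d : ℕ) [NeZero d]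
    (G : Matrix (ZMod d × ZMod d) (ZMod d × ZMod d) ℂ) (r s : ι) :
    Matrix (ι → ZMod d) (ι → ZMod d) ℂ :=
  Matrix.of fun p q =>
    if ∀ t, t ≠ r → t ≠ s → p t = q t then G (p r, p s) (q r, q s) else 0

/-- Embed a single-qudit gate `M` into a multi-register system, acting on register `r`. -/
def gate1 {ι : Type*} [Fintype ι] [DecidableEq ι] (d : ℕ) [NeZero d]
    (M : Matrix (ZMod d) (ZMod d) ℂ) (r : ι) :
    Matrix (ι → ZMod d) (ι → ZMod d) ℂ :=
  Matrix.of fun p q => if ∀ t, t ≠ r → p t = q t then M (p r) (q r) else 0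

/-- The controlled gate `c-U` on `ℂ^d ⊗ ℂ^d`: `(c-U)|j⟩|k⟩ = |j⟩ ⊗ U^j |k⟩`, the first factor
being the control register. -/
noncomputable def ctrl (d : ℕ) [NeZero d] (U : (Matrix (ZMod d) (ZMod d) ℂ)ˣ) :
    Matrix (ZMod d × ZMod d) (ZMod d × ZMod d) ℂ :=
  Matrix.of fun p q =>
    if p.1 = q.1 then ((U ^ q.1.val : (Matrix (ZMod d) (ZMod d) ℂ)ˣ) : Matrix (ZMod d) (ZMod d) ℂ) p.2 q.2
    else 0

section Helpers
variable (d : ℕ) [NeZero d]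

lemma omega_pow_d : ω d ^ d = 1 := by
  rw [ω, ← Complex.exp_nat_mul]
  have hd : (d:ℂ) ≠ 0 := Nat.cast_ne_zero.mpr (NeZero.ne d)
  rw [mul_div_assoc', mul_div_cancel_left₀ _ hd]
  exact Complex.exp_two_pi_mul_I

lemma omega_pow_mod (n : ℕ) : ω d ^ (n % d) = ω d ^ n := by
  conv_rhs => rw [← Nat.mod_add_div n d, pow_add, pow_mul, omega_pow_d, one_pow, mul_one]

lemma omega_val_add (a b : ZMod d) :
    ω d ^ (a + b).val = ω d ^ a.val * ω d ^ b.val := by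
  rw [ZMod.val_add, omega_pow_mod, pow_add]

lemma XU_inv_coe : ((XU d)⁻¹ : (Matrix (ZMod d) (ZMod d) ℂ)ˣ) = (XmatInv d : Matrix (ZMod d) (ZMod d) ℂ) := rfl

lemma Xpow_apply (j : ℤ) :
    Xpow d j = Matrix.of fun a b => if a = b + (j : ZMod d) then (1:ℂ) else 0 := by
  induction j using Int.induction_on with
  | zero =>
    ext a b
    simp [Xpow, Matrix.one_apply]
  | succ n ih =>
    have h : Xpow d (n + 1) = Xpow d n * Xmat d := by
      rw [Xpow, Xpow, zpow_add_one (XU d), Units.val_mul]; rfl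
    rw [h, ih]
    ext a b
    rw [Matrix.mul_apply, Finset.sum_eq_single (b + 1)]
    · simp only [Matrix.of_apply, Xmat]
      push_cast
      simp [add_comm, add_assoc, add_left_comm]
    · intro c _ hc
      have : ¬ (c = b + 1) := hc
      simp [Xmat, this]
    · intro h; exact absurd (Finset.mem_univ _) h
  | pred n ih =>
    have h : Xpow d (-n - 1) = Xpow d (-n) * XmatInv d := by
      rw [Xpow, Xpow, sub_eq_add_neg, zpow_add (XU d), _root_.zpow_neg_one, Units.val_mul, XU_inv_coe]
    rw [h, ih]
    ext a b
    rw [Matrix.mul_apply, Finset.sum_eq_single (b - 1)]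
    · simp only [Matrix.of_apply, XmatInv, sub_add_cancel, if_pos rfl, mul_one]
      push_cast
      rw [mul_one, show (b - 1 + -(n:ZMod d)) = b + (-(n:ZMod d) - 1) from by ring]
    · intro c _ hc
      have : ¬ (b = c + 1) := fun h' => hc (by rw [h', add_sub_cancel_right])
      simp [XmatInv, this]
    · intro h; exact absurd (Finset.mem_univ _) h

end Helpers
section Helpers2
variable (d : ℕ) [NeZero d]

lemma Zpow_apply (k : ℤ) :
    Zpow d k = Matrix.diagonal fun i : ZMod d => (ω d ^ i.val) ^ k := by
  induction k using Int.induction_on with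
  | zero =>
    ext a b
    simp [Zpow, Matrix.one_apply, Matrix.diagonal]
  | succ n ih =>
    have h : Zpow d (n + 1) = Zpow d n * Zmat d := by
      rw [Zpow, Zpow, zpow_add_one (ZU d), Units.val_mul]; rfl
    rw [h, ih, Zmat, Matrix.diagonal_mul_diagonal]
    have he : (fun i : ZMod d => (ω d ^ i.val) ^ (n : ℤ) * ω d ^ i.val)
        = fun i : ZMod d => (ω d ^ i.val) ^ ((n : ℤ) + 1) :=
      funext fun i => (zpow_add_one₀ (pow_ne_zero _ (omega_ne_zero d)) _).symm
    rw [he]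
  | pred n ih =>
    have h : Zpow d (-n - 1) = Zpow d (-n) * (Matrix.diagonal fun i : ZMod d => (ω d ^ i.val)⁻¹) := by
      rw [Zpow, Zpow, sub_eq_add_neg, zpow_add (ZU d), _root_.zpow_neg_one, Units.val_mul]; rfl
    rw [h, ih, Matrix.diagonal_mul_diagonal]
    have he : (fun i : ZMod d => (ω d ^ i.val) ^ (-(n : ℤ)) * (ω d ^ i.val)⁻¹)
        = fun i : ZMod d => (ω d ^ i.val) ^ (-(n : ℤ) - 1) :=
      funext fun i => (zpow_sub_one₀ (pow_ne_zero _ (omega_ne_zero d)) _).symm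
    rw [he]

lemma phi_apply (a b : ZMod d) :
    phi d (a, b) = (1 / (Real.sqrt d : ℂ)) * if a = b then 1 else 0 := by
  simp only [phi, Pi.smul_apply, Finset.sum_apply, smul_eq_mul]
  congr 1
  rw [Finset.sum_eq_single a]
  · simp [eq_comm]
  · intro c _ hc
    simp [hc.symm]
  · intro h; exact absurd (Finset.mem_univ _) h

lemma bell_apply (j k : ℤ) (a b : ZMod d) :
    bell d j k (a, b) =
      (1 / (Real.sqrt d : ℂ)) *
        if a = b + (j : ZMod d) then (ω d ^ b.val) ^ k else 0 := by
  have hM : (Xpow d j * Zpow d k) a b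
      = if a = b + (j : ZMod d) then (ω d ^ b.val) ^ k else 0 := by
    rw [Xpow_apply, Zpow_apply, Matrix.mul_apply, Finset.sum_eq_single b]
    · simp [Matrix.diagonal]
    · intro c _ hc
      simp [Matrix.diagonal, hc]
    · intro h; exact absurd (Finset.mem_univ _) h
  rw [bell]
  show ∑ q : ZMod d × ZMod d, _ * phi d q = _
  rw [Fintype.sum_prod_type, Finset.sum_eq_single b]
  · rw [Finset.sum_eq_single b]
    · rw [Matrix.kroneckerMap_apply, Matrix.one_apply_eq, mul_one, phi_apply, if_pos rfl,
        mul_one, hM]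
      ring
    · intro e _ he
      rw [Matrix.kroneckerMap_apply, Matrix.one_apply_ne (Ne.symm he)]
      simp
    · intro h; exact absurd (Finset.mem_univ _) h
  · intro c _ hc
    apply Finset.sum_eq_zero
    intro e _
    rcases eq_or_ne e b with rfl | he
    · rw [phi_apply, if_neg hc]
      simp
    · rw [Matrix.kroneckerMap_apply, Matrix.one_apply_ne (Ne.symm he)]
      simp
  · intro h; exact absurd (Finset.mem_univ _) h

end Helpers2
section Helpers3
variable (d : ℕ) [NeZero d]

lemma ctrl_XU_apply (x y a b : ZMod d) :
    ctrl d (XU d) (x, y) (a, b) = if x = a ∧ y = b + a then 1 else 0 := by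
  have h : ((XU d ^ a.val : (Matrix (ZMod d) (ZMod d) ℂ)ˣ) : Matrix (ZMod d) (ZMod d) ℂ)
      = Xpow d (a.val : ℤ) := by rw [Xpow, zpow_natCast]
  have ha : ((a.val : ℤ) : ZMod d) = a := by
    push_cast
    rw [ZMod.natCast_val, ZMod.cast_id]
  simp only [ctrl, Matrix.of_apply, h, Xpow_apply, ha]
  by_cases h1 : x = a <;> by_cases h2 : y = b + a <;> simp [h1, h2]

lemma gate2_ctrlX_mulVec {ι : Type*} [Fintype ι] [DecidableEq ι] (r s : ι) (hrs : r ≠ s)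
    (v : (ι → ZMod d) → ℂ) (p : ι → ZMod d) :
    (gate2 d (ctrl d (XU d)) r s).mulVec v p = v (Function.update p s (p s - p r)) := by
  set q₀ := Function.update p s (p s - p r) with hq₀
  have hq₀r : q₀ r = p r := Function.update_of_ne hrs _ _
  have hq₀s : q₀ s = p s - p r := Function.update_self _ _ _
  show ∑ q, gate2 d (ctrl d (XU d)) r s p q * v q = _
  rw [Finset.sum_eq_single q₀]
  · have hcond : ∀ t, t ≠ r → t ≠ s → p t = q₀ t := by
      intro t _ hts
      rw [hq₀, Function.update_of_ne hts]
    rw [gate2, Matrix.of_apply, if_pos hcond, hq₀r, hq₀s, ctrl_XU_apply,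
      if_pos ⟨rfl, by ring⟩, one_mul]
  · intro q _ hq
    rw [gate2, Matrix.of_apply]
    split_ifs with hcond
    · rw [ctrl_XU_apply]
      split_ifs with hc
      · exfalso
        apply hq
        funext t
        rcases eq_or_ne t s with rfl | hts
        · rw [hq₀s, hc.2, hc.1]; ring
        · rcases eq_or_ne t r with rfl | htr
          · rw [hq₀r, hc.1]
          · rw [hq₀, Function.update_of_ne hts, hcond t htr hts]
      · exact zero_mul _
    · exact zero_mul _
  · intro h; exact absurd (Finset.mem_univ _) h

end Helpers3
/-- Registers are ordered `A₁ = 0`, `B₁ = 1`, `A₂ = 2`, `B₂ = 3`.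
Applying `(c-X)_{A₁A₂} · (c-X)_{B₁B₂}` to `|φ^{j₁,k₁}⟩_{A₁B₁} ⊗ |φ^{j₂,k₂}⟩_{A₂B₂}` produces
`|φ^{j₁, k₁−k₂}⟩_{A₁B₁} ⊗ |φ^{j₁+j₂, k₂}⟩_{A₂B₂}`. -/
theorem cnot_pair_on_bell_states (d : ℕ) [NeZero d] (hd : 2 ≤ d) (j₁ k₁ j₂ k₂ : ℤ) :
    Matrix.mulVec
        (gate2 d (ctrl d (XU d)) (0 : Fin 4) 2 * gate2 d (ctrl d (XU d)) (1 : Fin 4) 3)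
        (fun p : Fin 4 → ZMod d => bell d j₁ k₁ (p 0, p 1) * bell d j₂ k₂ (p 2, p 3)) =
      fun p : Fin 4 → ZMod d =>
        bell d j₁ (k₁ - k₂) (p 0, p 1) * bell d (j₁ + j₂) k₂ (p 2, p 3) := by
  funext p
  rw [← Matrix.mulVec_mulVec, gate2_ctrlX_mulVec d _ _ (by decide),
      gate2_ctrlX_mulVec d _ _ (by decide)]
  set q : Fin 4 → ZMod d := Function.update p 2 (p 2 - p 0) with hq
  have hq0 : q 0 = p 0 := Function.update_of_ne (by decide) _ _
  have hq1 : q 1 = p 1 := Function.update_of_ne (by decide) _ _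
  have hq2 : q 2 = p 2 - p 0 := Function.update_self _ _ _
  have hq3 : q 3 = p 3 := Function.update_of_ne (by decide) _ _
  set q' : Fin 4 → ZMod d := Function.update q 3 (q 3 - q 1) with hq'
  have h0 : q' 0 = p 0 := by rw [hq', Function.update_of_ne (by decide), hq0]
  have h1 : q' 1 = p 1 := by rw [hq', Function.update_of_ne (by decide), hq1]
  have h2 : q' 2 = p 2 - p 0 := by rw [hq', Function.update_of_ne (by decide), hq2]
  have h3 : q' 3 = p 3 - p 1 := by rw [hq', Function.update_self, hq3, hq1]
  show bell d j₁ k₁ (q' 0, q' 1) * bell d j₂ k₂ (q' 2, q' 3) = _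
  rw [h0, h1, h2, h3]
  simp only [bell_apply]
  set c : ℂ := 1 / (Real.sqrt d : ℂ)
  by_cases hc1 : p 0 = p 1 + (j₁ : ZMod d)
  · have hcast : ((j₁ + j₂ : ℤ) : ZMod d) = (j₁ : ZMod d) + (j₂ : ZMod d) := by push_cast; ring
    have hiff : (p 2 - p 0 = (p 3 - p 1) + (j₂ : ZMod d)) ↔
        (p 2 = p 3 + ((j₁ : ZMod d) + (j₂ : ZMod d))) := by
      constructor <;> intro h
      · linear_combination h + hc1
      · linear_combination h - hc1
    by_cases hc2 : p 2 = p 3 + ((j₁ : ZMod d) + (j₂ : ZMod d))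
    · rw [if_pos hc1, if_pos (hiff.mpr hc2), if_pos hc1, hcast, if_pos hc2]
      have hsp : ω d ^ (p 3).val = ω d ^ (p 1).val * ω d ^ (p 3 - p 1).val := by
        have h' : p 1 + (p 3 - p 1) = p 3 := by ring
        have := omega_val_add d (p 1) (p 3 - p 1)
        rw [h'] at this
        exact this
      have hu : (ω d ^ (p 1).val) ≠ 0 := pow_ne_zero _ (omega_ne_zero d)
      rw [hsp, mul_zpow, zpow_sub₀ hu]
      field_simp
    · rw [if_pos hc1, if_neg (fun hh => hc2 (hiff.mp hh)), if_pos hc1, hcast, if_neg hc2]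
      ring
  · rw [if_neg hc1, if_neg hc1]
    ring
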